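/- For every positive integer n, every choice of points z_1,...,z_n on the unit circle, and every δ with 0 < δ < 1/2, the Lebesgue measure of the set E = {x ∈ [−1,1] : |Re(x·g_n(x))| ≥ δn} is at least K(δ)/n, where K(δ) = (3/32)·(1 − 2δ)/(1 + 2δ)² and g_n(x) = ∑_{k=1}^n 1/(x − z_k). -/

import Mathlib

open MeasureTheory Set Finset

lemma normSq_one_of_abs (c : ℂ) (hc : ‖c‖ = 1) :
    c.re * c.re + c.im * c.im = 1 := by
  have h := Complex.normSq_eq_norm_sq c
  rw [hc] at h
  rw [← Complex.normSq_apply, h]; norm_num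

lemma abs_one_sub_sq (c : ℂ) (hc : ‖c‖ = 1) :
    ‖1 - c‖ ^ 2 = 2 - 2 * c.re := by
  have hc' := normSq_one_of_abs c hc
  rw [Complex.sq_norm, Complex.normSq_apply]
  simp only [Complex.sub_re, Complex.sub_im, Complex.one_re, Complex.one_im]
  linear_combination hc'

lemma normSq_sub_eq (x : ℝ) (c : ℂ) (hc : ‖c‖ = 1) :
    Complex.normSq ((x : ℂ) - c) = (1 - x) ^ 2 + x * ‖1 - c‖ ^ 2 := by
  have hc' := normSq_one_of_abs c hc
  rw [abs_one_sub_sq c hc, Complex.normSq_apply]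
  simp only [Complex.sub_re, Complex.sub_im, Complex.ofReal_re, Complex.ofReal_im]
  linear_combination hc'

lemma re_term (x : ℝ) (c : ℂ) (hc : ‖c‖ = 1) (hne : (x : ℂ) ≠ c) :
    ((x : ℂ) * (1 / ((x : ℂ) - c))).re
      = 1 / 2 - (1 - x ^ 2) / (2 * ((1 - x) ^ 2 + x * ‖1 - c‖ ^ 2)) := by
  have hQ := normSq_sub_eq x c hc
  have hQ0 : Complex.normSq ((x : ℂ) - c) ≠ 0 := by
    exact ne_of_gt (Complex.normSq_pos.mpr (sub_ne_zero.mpr hne))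
  have hD0 : (1 - x) ^ 2 + x * ‖1 - c‖ ^ 2 ≠ 0 := hQ ▸ hQ0
  have hS := abs_one_sub_sq c hc
  rw [mul_one_div, Complex.div_re, hQ]
  simp only [Complex.ofReal_re, Complex.ofReal_im, Complex.sub_re, Complex.sub_im,
    Complex.ofReal_re]
  rw [hS] at hD0 ⊢
  have hD1 : (1 - x) ^ 2 + x * 2 * (1 - c.re) ≠ 0 := by
    intro h; apply hD0; linear_combination h
  field_simp
  ring
lemma re_sum {n : ℕ} (z : Fin n → ℂ) (hz : ∀ k, ‖z k‖ = 1) (x : ℝ)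
    (hne : ∀ k, (x : ℂ) ≠ z k) :
    ((x : ℂ) * ∑ k, 1 / ((x : ℂ) - z k)).re
      = (n : ℝ) / 2 - (∑ k, (1 - x ^ 2) / ((1 - x) ^ 2 + x * ‖1 - z k‖ ^ 2)) / 2 := by
  rw [Finset.mul_sum, Complex.re_sum]
  have : ∀ k : Fin n, ((x : ℂ) * (1 / ((x : ℂ) - z k))).re
      = 1 / 2 - (1 - x ^ 2) / (2 * ((1 - x) ^ 2 + x * ‖1 - z k‖ ^ 2)) :=
    fun k => re_term x (z k) (hz k) (hne k)
  rw [Finset.sum_congr rfl (fun k _ => this k), Finset.sum_sub_distrib]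
  rw [Finset.sum_const, Finset.card_univ, Fintype.card_fin]
  rw [Finset.sum_div]
  congr 1
  · simp [nsmul_eq_mul]; ring
  · apply Finset.sum_congr rfl
    intro k _
    rw [div_div, mul_comm]

lemma telescope_sum (ρ : ℝ) (hρ0 : 0 ≤ ρ) (hρ : ρ ≤ 1 / 8) (m : ℕ) :
    ∑ j ∈ Finset.range m, (1 : ℝ) / ((j : ℝ) + 1 - ρ) ^ 2 ≤ 8 / 3 := by
  have key : ∀ j ∈ Finset.range m, (1 : ℝ) / ((j : ℝ) + 1 - ρ) ^ 2
      ≤ (fun i : ℕ => 1 / ((i : ℝ) + 1 / 2 - ρ)) j - (fun i : ℕ => 1 / ((i : ℝ) + 1 / 2 - ρ)) (j + 1) := by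
    intro j _
    have h1 : (0 : ℝ) < (j : ℝ) + 1 / 2 - ρ := by
      have : (0 : ℝ) ≤ (j : ℝ) := Nat.cast_nonneg j
      linarith
    have h2 : (0 : ℝ) < (j : ℝ) + 1 + 1 / 2 - ρ := by linarith
    simp only []
    push_cast
    rw [div_sub_div _ _ (ne_of_gt h1) (ne_of_gt h2)]
    have hnum : 1 * ((j : ℝ) + 1 + 1 / 2 - ρ) - ((j : ℝ) + 1 / 2 - ρ) * 1 = 1 := by ring
    rw [hnum]
    have h0 : (0 : ℝ) < (j : ℝ) + 1 - ρ := by linarith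
    rw [div_le_div_iff₀ (pow_pos h0 2) (mul_pos h1 h2)]
    nlinarith
  calc ∑ j ∈ Finset.range m, (1 : ℝ) / ((j : ℝ) + 1 - ρ) ^ 2
      ≤ ∑ j ∈ Finset.range m, ((fun i : ℕ => 1 / ((i : ℝ) + 1 / 2 - ρ)) j
          - (fun i : ℕ => 1 / ((i : ℝ) + 1 / 2 - ρ)) (j + 1)) := Finset.sum_le_sum key
    _ = 1 / ((0 : ℝ) + 1 / 2 - ρ) - 1 / ((m : ℝ) + 1 / 2 - ρ) := by
        rw [Finset.sum_range_sub' (fun i : ℕ => 1 / ((i : ℝ) + 1 / 2 - ρ))]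
        norm_num
    _ ≤ 8 / 3 := by
        have h1 : (0 : ℝ) < (m : ℝ) + 1 / 2 - ρ := by
          have : (0 : ℝ) ≤ (m : ℝ) := Nat.cast_nonneg m
          linarith
        have h2 : (0 : ℝ) ≤ 1 / ((m : ℝ) + 1 / 2 - ρ) := by positivity
        have h3 : (0 : ℝ) < 0 + 1 / 2 - ρ := by linarith
        have : 1 / ((0 : ℝ) + 1 / 2 - ρ) ≤ 8 / 3 := by
          rw [div_le_div_iff₀ h3 (by norm_num)]
          linarith
        linarith

lemma rank_lt {n : ℕ} (w : Fin n → ℝ) (hw : Monotone w) (c : ℝ) (j : Fin n)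
    (hj : w j < c) : (j : ℕ) < (Finset.univ.filter (fun i => w i < c)).card := by
  have hsub : Finset.Iic j ⊆ Finset.univ.filter (fun i => w i < c) := by
    intro i hi
    rw [Finset.mem_Iic] at hi
    rw [Finset.mem_filter]
    exact ⟨Finset.mem_univ i, lt_of_le_of_lt (hw hi) hj⟩
  have := Finset.card_le_card hsub
  rw [Fin.card_Iic] at this
  omega

lemma card_filter_perm {n : ℕ} (s : Fin n → ℝ) (σ : Equiv.Perm (Fin n)) (c : ℝ) :
    (Finset.univ.filter (fun i => s (σ i) < c)).card
      = (Finset.univ.filter (fun k => s k < c)).card := by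
  apply Finset.card_bij (fun i _ => σ i)
  · intro a ha
    rw [Finset.mem_filter] at ha ⊢
    exact ⟨Finset.mem_univ _, ha.2⟩
  · intro a _ b _ hab
    exact σ.injective hab
  · intro b hb
    rw [Finset.mem_filter] at hb
    exact ⟨σ.symm b, by rw [Finset.mem_filter]; simpa using hb.2, by simp⟩
set_option maxHeartbeats 2000000 in
lemma side {n : ℕ} (hn : 0 < n) (z : Fin n → ℂ) (hz : ∀ k, ‖z k‖ = 1)
    (δ : ℝ) (hδ0 : 0 < δ) (hδ1 : δ < 1 / 2)
    (hp : 2 * (Finset.univ.filter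
        (fun k => ‖1 - z k‖ < Real.sqrt 2)).card ≤ n) :
    ∃ a : ℝ, Icc a (a + 3 * (1 - 2 * δ) / (32 * (1 + 2 * δ) ^ 2 * n)) ⊆
      {x : ℝ | x ∈ Icc (-1 : ℝ) 1 ∧ δ * n ≤ |((x : ℂ) * ∑ k, 1 / ((x : ℂ) - z k)).re|} := by
  have hN : (1 : ℝ) ≤ (n : ℝ) := by exact_mod_cast hn
  have hN0 : (0 : ℝ) < (n : ℝ) := by linarith
  have hd1 : (0 : ℝ) < 1 + 2 * δ := by linarith
  have hd2 : (0 : ℝ) < 1 - 2 * δ := by linarith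
  obtain ⟨u₁, hu₁def⟩ : ∃ t : ℝ, t = 3 / (4 * (1 + 2 * δ) * (n : ℝ)) := ⟨_, rfl⟩
  obtain ⟨L, hLdef⟩ : ∃ t : ℝ, t = 3 * (1 - 2 * δ) / (32 * (1 + 2 * δ) ^ 2 * (n : ℝ)) := ⟨_, rfl⟩
  obtain ⟨ρ, hρdef⟩ : ∃ t : ℝ, t = (1 - 2 * δ) / (8 * (1 + 2 * δ)) := ⟨_, rfl⟩
  have hu₁ : 0 < u₁ := by rw [hu₁def]; positivity
  have hL : 0 < L := by rw [hLdef]; positivity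
  have hρ0 : 0 < ρ := by rw [hρdef]; positivity
  have hu₁eq : 4 * (1 + 2 * δ) * (n : ℝ) * u₁ = 3 := by
    rw [hu₁def]; field_simp
  have hρ8 : ρ ≤ 1 / 8 := by
    rw [hρdef, div_le_div_iff₀ (by linarith) (by norm_num)]
    linarith
  have hLu : L = ρ * u₁ := by
    rw [hLdef, hρdef, hu₁def]
    field_simp
    ring
  have hL32 : L ≤ 3 / 32 := by
    rw [hLdef, div_le_div_iff₀ (by positivity) (by norm_num)]
    nlinarith
  obtain ⟨s, hsdef⟩ : ∃ f : Fin n → ℝ, f = fun k => ‖1 - z k‖ := ⟨_, rfl⟩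
  have hs_app : ∀ k, ‖1 - z k‖ = s k := fun k => by rw [hsdef]
  obtain ⟨σ, hσdef⟩ : ∃ e : Equiv.Perm (Fin n), e = Tuple.sort s := ⟨_, rfl⟩
  obtain ⟨w, hwdef⟩ : ∃ f : Fin n → ℝ, f = s ∘ σ := ⟨_, rfl⟩
  have hmono : Monotone w := by rw [hwdef, hσdef]; exact Tuple.monotone_sort s
  have hw0 : ∀ j, 0 ≤ w j := by
    intro j
    rw [hwdef, hsdef]
    exact norm_nonneg _
  have hsw : ∀ k, s k = w (σ.symm k) := by
    intro k
    rw [hwdef]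
    simp
  have hsqrt2 : (1 : ℝ) ≤ Real.sqrt 2 := by
    have := Real.sqrt_le_sqrt (show (1 : ℝ) ≤ 2 by norm_num)
    rwa [Real.sqrt_one] at this
  have key : ∀ x : ℝ, (∀ k, (x : ℂ) ≠ z k) →
      ((x : ℂ) * ∑ k, 1 / ((x : ℂ) - z k)).re
        = (n : ℝ) / 2 - (∑ j, (1 - x ^ 2) / ((1 - x) ^ 2 + x * (w j) ^ 2)) / 2 := by
    intro x hne
    rw [re_sum z hz x hne]
    have hre : ∑ k, (1 - x ^ 2) / ((1 - x) ^ 2 + x * ‖1 - z k‖ ^ 2)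
        = ∑ j, (1 - x ^ 2) / ((1 - x) ^ 2 + x * (w j) ^ 2) := by
      simp_rw [hs_app, hwdef]
      exact (Equiv.sum_comp σ (fun k => (1 - x ^ 2) / ((1 - x) ^ 2 + x * (s k) ^ 2))).symm
    rw [hre]
  rw [← hLdef]
  by_cases hA : ∃ j : Fin n, w j ≤ (((j : ℕ) : ℝ) + 1) * u₁ - L
  · -- Case A : some zero close to 1
    obtain ⟨j, hj⟩ := hA
    obtain ⟨m, hmdef⟩ : ∃ t : ℝ, t = ((j : ℕ) : ℝ) + 1 := ⟨_, rfl⟩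
    have hj' : w j ≤ m * u₁ - L := by rw [hmdef]; exact hj
    have hm1 : (1 : ℝ) ≤ m := by
      have : (0 : ℝ) ≤ ((j : ℕ) : ℝ) := Nat.cast_nonneg _
      rw [hmdef]; linarith
    have hmN : m ≤ (n : ℝ) := by
      rw [hmdef]
      have : (j : ℕ) + 1 ≤ n := j.isLt
      exact_mod_cast this
    have hmu₁N : m * u₁ ≤ 3 / 4 := by
      linarith [mul_nonneg (sub_nonneg.mpr hmN) hu₁.le,
        mul_nonneg (mul_nonneg (show (0:ℝ) ≤ 8 * δ by linarith) hN0.le) hu₁.le, hu₁eq]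
    have hwjs : w j < Real.sqrt 2 := by linarith
    have hjp : m ≤ ((Finset.univ.filter (fun k => s k < Real.sqrt 2)).card : ℝ) := by
      have h1 : (j : ℕ) < (Finset.univ.filter (fun i => w i < Real.sqrt 2)).card :=
        rank_lt w hmono _ j hwjs
      have h2 : (Finset.univ.filter (fun i => w i < Real.sqrt 2)).card
          = (Finset.univ.filter (fun k => s k < Real.sqrt 2)).card := by
        simp_rw [hwdef]
        exact card_filter_perm s σ _
      rw [h2] at h1
      rw [hmdef]
      have : (j : ℕ) + 1 ≤ (Finset.univ.filter (fun k => s k < Real.sqrt 2)).card := h1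
      exact_mod_cast this
    have h2m : 2 * m ≤ (n : ℝ) := by
      have hpn : 2 * (((Finset.univ.filter (fun k => s k < Real.sqrt 2)).card : ℕ) : ℝ) ≤ (n : ℝ) := by
        have hfilter : (Finset.univ.filter (fun k => s k < Real.sqrt 2))
            = (Finset.univ.filter (fun k => ‖1 - z k‖ < Real.sqrt 2)) := by
          rw [hsdef]
        rw [hfilter]
        exact_mod_cast hp
      linarith
    obtain ⟨b, hbdef⟩ : ∃ t : ℝ, t = m * u₁ := ⟨_, rfl⟩
    have hb0 : 0 < b := by
      rw [hbdef]
      exact mul_pos (by linarith) hu₁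
    have hbL : 0 < b - L := by
      rw [hbdef, hLu]
      linarith [mul_nonneg (show (0:ℝ) ≤ m - 1 by linarith) hu₁.le,
        mul_nonneg (show (0:ℝ) ≤ 1/8 - ρ by linarith) hu₁.le]
    have hb38 : b ≤ 3 / 8 := by
      rw [hbdef]
      linarith [mul_nonneg (sub_nonneg.mpr h2m) hu₁.le, hu₁eq,
        mul_nonneg (mul_nonneg (show (0:ℝ) ≤ 8 * δ by linarith) hN0.le) hu₁.le]
    refine ⟨1 - b, ?_⟩
    intro x hx
    rw [Set.mem_Icc] at hx
    obtain ⟨hx1, hx2⟩ := hx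
    have hu1 : b - L ≤ 1 - x := by linarith
    have hu2 : 1 - x ≤ b := by linarith
    have hu0 : 0 < 1 - x := lt_of_lt_of_le hbL hu1
    have hub : 1 - x ≤ 3 / 8 := le_trans hu2 hb38
    have hx58 : 5 / 8 ≤ x := by linarith
    have hxlt1 : x < 1 := by linarith
    have hne : ∀ k, (x : ℂ) ≠ z k := by
      intro k h
      have habs := congrArg norm h
      rw [Complex.norm_real, Real.norm_eq_abs, hz k] at habs
      have : |x| < 1 := abs_lt.mpr ⟨by linarith, hxlt1⟩
      linarith [habs.ge.trans_lt this]
    have hdenpos : ∀ i : Fin n, 0 < (1 - x) ^ 2 + x * (w i) ^ 2 := by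
      intro i
      have h1 : 0 < (1 - x) ^ 2 := pow_pos hu0 2
      have h2 : 0 ≤ x * (w i) ^ 2 := mul_nonneg (by linarith) (sq_nonneg _)
      linarith
    constructor
    · exact ⟨by linarith, by linarith⟩
    · rw [key x hne]
      have hS : (1 + 2 * δ) * (n : ℝ) ≤ ∑ i, (1 - x ^ 2) / ((1 - x) ^ 2 + x * (w i) ^ 2) := by
        have hterm : ∀ i ∈ Finset.Iic j,
            3 / (4 * (1 - x)) ≤ (1 - x ^ 2) / ((1 - x) ^ 2 + x * (w i) ^ 2) := by
          intro i hi
          have hwi : w i ≤ w j := hmono (Finset.mem_Iic.mp hi)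
          have hwiu : w i ≤ 1 - x := by linarith
          have hden_le : (1 - x) ^ 2 + x * (w i) ^ 2 ≤ 2 * (1 - x) ^ 2 := by
            nlinarith [mul_self_le_mul_self (hw0 i) hwiu,
              mul_nonneg (sub_nonneg.mpr hxlt1.le) (sq_nonneg (w i))]
          rw [div_le_div_iff₀ (by linarith) (hdenpos i)]
          nlinarith [mul_le_mul_of_nonneg_right (show (13:ℝ)/8 ≤ 1 + x by linarith)
            (sq_nonneg (1 - x))]
        have hsum := Finset.card_nsmul_le_sum (Finset.Iic j) _ _ hterm
        rw [Fin.card_Iic, nsmul_eq_mul] at hsum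
        have hcast : (((j : ℕ) + 1 : ℕ) : ℝ) = m := by rw [hmdef]; push_cast; ring
        rw [hcast] at hsum
        have htot : ∑ i ∈ Finset.Iic j, (1 - x ^ 2) / ((1 - x) ^ 2 + x * (w i) ^ 2)
            ≤ ∑ i, (1 - x ^ 2) / ((1 - x) ^ 2 + x * (w i) ^ 2) := by
          apply Finset.sum_le_sum_of_subset_of_nonneg (Finset.subset_univ _)
          intro i _ _
          exact div_nonneg (by nlinarith) (hdenpos i).le
        have hfin : (1 + 2 * δ) * (n : ℝ) ≤ m * (3 / (4 * (1 - x))) := by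
          have h3m : 4 * (1 + 2 * δ) * (n : ℝ) * (m * u₁) = 3 * m := by
            rw [show 4 * (1 + 2 * δ) * (n:ℝ) * (m * u₁) = (4 * (1 + 2 * δ) * (n:ℝ) * u₁) * m
              by ring, hu₁eq]
          have hmul : (1 - x) * (4 * (1 + 2 * δ) * (n:ℝ)) ≤ m * u₁ * (4 * (1 + 2 * δ) * (n:ℝ)) := by
            apply mul_le_mul_of_nonneg_right _ (by positivity)
            rw [← hbdef]; exact hu2
          rw [mul_div_assoc', le_div_iff₀ (by linarith)]
          nlinarith
        linarith
      have hRe : (n:ℝ) / 2 - (∑ i, (1 - x ^ 2) / ((1 - x) ^ 2 + x * (w i) ^ 2)) / 2 ≤ -(δ * (n:ℝ)) := by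
        nlinarith
      calc δ * (n:ℝ) ≤ -((n:ℝ) / 2 - (∑ i, (1 - x ^ 2) / ((1 - x) ^ 2 + x * (w i) ^ 2)) / 2) := by
            linarith
        _ ≤ |(n:ℝ) / 2 - (∑ i, (1 - x ^ 2) / ((1 - x) ^ 2 + x * (w i) ^ 2)) / 2| := neg_le_abs _
  · -- Case B : no zero close to 1
    push_neg at hA
    have hwlow : ∀ jj : Fin n, u₁ * (((jj : ℕ) : ℝ) + 1 - ρ) < w jj := by
      intro jj
      have h := hA jj
      rw [hLu] at h
      linarith [h]
    have hdpos : ∀ jj : Fin n, 0 < u₁ * (((jj : ℕ) : ℝ) + 1 - ρ) := by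
      intro jj
      have : (0 : ℝ) ≤ ((jj : ℕ) : ℝ) := Nat.cast_nonneg _
      apply mul_pos hu₁
      linarith
    have hwpos : ∀ jj : Fin n, 0 < w jj := fun jj => lt_trans (hdpos jj) (hwlow jj)
    have hspos : ∀ k, 0 < s k := by
      intro k
      rw [hsw k]
      exact hwpos _
    refine ⟨1 - L, ?_⟩
    intro x hx
    rw [Set.mem_Icc] at hx
    obtain ⟨hx1, hx2⟩ := hx
    have hxle1 : x ≤ 1 := by linarith
    have hx29 : 29 / 32 ≤ x := by linarith
    have hne : ∀ k, (x : ℂ) ≠ z k := by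
      intro k h
      have habs := congrArg norm h
      rw [Complex.norm_real, Real.norm_eq_abs, hz k] at habs
      have hxeq : x = 1 := by
        rcases (abs_eq (by norm_num : (0:ℝ) ≤ 1)).mp habs with h' | h' <;> linarith
      have hz1 : z k = 1 := by
        rw [← h, hxeq]
        norm_num
      have : s k = 0 := by
        rw [← hs_app k, hz1, sub_self, norm_zero]
      linarith [hspos k]
    have hdenpos : ∀ i : Fin n, 0 < (1 - x) ^ 2 + x * (w i) ^ 2 := by
      intro i
      have h2 : 0 < x * (w i) ^ 2 := mul_pos (by linarith) (pow_pos (hwpos i) 2)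
      nlinarith [sq_nonneg (1 - x)]
    constructor
    · exact ⟨by linarith, hxle1⟩
    · rw [key x hne]
      have hL1 : 0 < 1 - L := by linarith
      have hS : ∑ i, (1 - x ^ 2) / ((1 - x) ^ 2 + x * (w i) ^ 2) ≤ (1 - 2 * δ) * (n:ℝ) := by
        have hterm : ∀ i : Fin n, (1 - x ^ 2) / ((1 - x) ^ 2 + x * (w i) ^ 2)
            ≤ (2 * L / (1 - L)) * (1 / (u₁ * (((i : ℕ) : ℝ) + 1 - ρ)) ^ 2) := by
          intro i
          have hd := hdpos i
          have hwd := hwlow i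
          have hnum : 1 - x ^ 2 ≤ 2 * L := by nlinarith
          have hnum0 : 0 ≤ 1 - x ^ 2 := by nlinarith
          have hden_ge : (1 - L) * (u₁ * (((i : ℕ) : ℝ) + 1 - ρ)) ^ 2
              ≤ (1 - x) ^ 2 + x * (w i) ^ 2 := by
            have h1 : (u₁ * (((i : ℕ) : ℝ) + 1 - ρ)) ^ 2 ≤ (w i) ^ 2 := by nlinarith
            have h2 : (1 - L) * (u₁ * (((i : ℕ) : ℝ) + 1 - ρ)) ^ 2 ≤ x * (w i) ^ 2 := by
              nlinarith [sq_nonneg (u₁ * (((i : ℕ) : ℝ) + 1 - ρ))]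
            nlinarith [sq_nonneg (1 - x)]
          calc (1 - x ^ 2) / ((1 - x) ^ 2 + x * (w i) ^ 2)
              ≤ (2 * L) / ((1 - L) * (u₁ * (((i : ℕ) : ℝ) + 1 - ρ)) ^ 2) :=
                div_le_div₀ (by positivity) hnum (mul_pos hL1 (pow_pos hd 2)) hden_ge
            _ = (2 * L / (1 - L)) * (1 / (u₁ * (((i : ℕ) : ℝ) + 1 - ρ)) ^ 2) := by
                rw [div_mul_div_comm, mul_one]
        have hsum := Finset.sum_le_sum (fun i (_ : i ∈ Finset.univ) => hterm i)
        have heq2 : ∑ i : Fin n, (2 * L / (1 - L)) * (1 / (u₁ * (((i : ℕ) : ℝ) + 1 - ρ)) ^ 2)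
            = (2 * L / (1 - L)) * ((1 / u₁ ^ 2) *
                ∑ jj ∈ Finset.range n, 1 / ((jj : ℝ) + 1 - ρ) ^ 2) := by
          rw [← Finset.mul_sum]
          congr 1
          rw [Finset.mul_sum]
          rw [← Fin.sum_univ_eq_sum_range (fun jj => (1 / u₁ ^ 2) * ((1:ℝ) / ((jj : ℝ) + 1 - ρ) ^ 2)) n]
          apply Finset.sum_congr rfl
          intro i _
          rw [mul_pow, one_div, one_div, one_div, mul_inv]
        have htel := telescope_sum ρ hρ0.le hρ8 n
        have hfinal : (2 * L / (1 - L)) * ((1 / u₁ ^ 2) * (8 / 3)) ≤ (1 - 2 * δ) * (n:ℝ) := by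
          have hid : (1 - 2 * δ) * (n:ℝ) * u₁ ^ 2 = 6 * L := by
            rw [hu₁def, hLdef]
            field_simp
            ring
          have hX : 0 < 1 / u₁ ^ 2 := by positivity
          have hrepl : (1 - 2 * δ) * (n:ℝ) = 6 * L * (1 / u₁ ^ 2) := by
            have hu2 : (u₁:ℝ) ^ 2 ≠ 0 := by positivity
            field_simp
            linarith [hid]
          rw [hrepl, div_mul_eq_mul_div, div_le_iff₀ hL1]
          nlinarith [mul_pos hL hX]
        have hmono2 : (2 * L / (1 - L)) * ((1 / u₁ ^ 2) *
            ∑ jj ∈ Finset.range n, 1 / ((jj : ℝ) + 1 - ρ) ^ 2)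
            ≤ (2 * L / (1 - L)) * ((1 / u₁ ^ 2) * (8 / 3)) := by
          apply mul_le_mul_of_nonneg_left _ (by positivity)
          apply mul_le_mul_of_nonneg_left htel (by positivity)
        calc ∑ i, (1 - x ^ 2) / ((1 - x) ^ 2 + x * (w i) ^ 2)
            ≤ ∑ i : Fin n, (2 * L / (1 - L)) * (1 / (u₁ * (((i : ℕ) : ℝ) + 1 - ρ)) ^ 2) := hsum
          _ = (2 * L / (1 - L)) * ((1 / u₁ ^ 2) * ∑ jj ∈ Finset.range n, 1 / ((jj : ℝ) + 1 - ρ) ^ 2) := heq2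
          _ ≤ (2 * L / (1 - L)) * ((1 / u₁ ^ 2) * (8 / 3)) := hmono2
          _ ≤ (1 - 2 * δ) * (n:ℝ) := hfinal
      calc δ * (n:ℝ) ≤ (n:ℝ) / 2 - (∑ i, (1 - x ^ 2) / ((1 - x) ^ 2 + x * (w i) ^ 2)) / 2 := by
            linarith
        _ ≤ |(n:ℝ) / 2 - (∑ i, (1 - x ^ 2) / ((1 - x) ^ 2 + x * (w i) ^ 2)) / 2| := le_abs_self _
lemma not_both_close (c : ℂ) (hc : ‖c‖ = 1)
    (h1 : ‖1 - c‖ < Real.sqrt 2) (h2 : ‖1 + c‖ < Real.sqrt 2) :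
    False := by
  have hc' : c.re * c.re + c.im * c.im = 1 := by
    have h := Complex.normSq_eq_norm_sq c
    rw [hc] at h
    rw [← Complex.normSq_apply, h]; norm_num
  have e1 : ‖1 - c‖ ^ 2 < 2 := by
    have := mul_self_lt_mul_self (norm_nonneg _) h1
    rwa [Real.mul_self_sqrt (by norm_num), ← sq] at this
  have e2 : ‖1 + c‖ ^ 2 < 2 := by
    have := mul_self_lt_mul_self (norm_nonneg _) h2
    rwa [Real.mul_self_sqrt (by norm_num), ← sq] at this
  have hsum : ‖1 - c‖ ^ 2 + ‖1 + c‖ ^ 2 = 4 := by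
    rw [Complex.sq_norm, Complex.sq_norm, Complex.normSq_apply, Complex.normSq_apply]
    simp only [Complex.add_re, Complex.add_im, Complex.sub_re, Complex.sub_im,
      Complex.one_re, Complex.one_im]
    linear_combination 2 * hc'
  linarith

theorem stmt8 (n : ℕ) (hn : 0 < n) (z : Fin n → ℂ) (hz : ∀ k, ‖z k‖ = 1)
    (δ : ℝ) (hδ0 : 0 < δ) (hδ1 : δ < 1 / 2) :
    ENNReal.ofReal ((3 / 32) * (1 - 2 * δ) / (1 + 2 * δ) ^ 2 / n) ≤
      volume {x : ℝ | x ∈ Icc (-1 : ℝ) 1 ∧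
        δ * n ≤ |((x : ℂ) * ∑ k, 1 / ((x : ℂ) - z k)).re|} := by
  have hN0 : (0 : ℝ) < (n : ℝ) := by exact_mod_cast hn
  have hd1 : (0 : ℝ) < 1 + 2 * δ := by linarith
  have hmeas : ∀ (a : ℝ),
      ENNReal.ofReal ((3 / 32) * (1 - 2 * δ) / (1 + 2 * δ) ^ 2 / n)
        ≤ volume (Icc a (a + 3 * (1 - 2 * δ) / (32 * (1 + 2 * δ) ^ 2 * n))) := by
    intro a
    rw [Real.volume_Icc]
    apply le_of_eq
    congr 1
    have h1 : (3 : ℝ) / 32 * (1 - 2 * δ) / (1 + 2 * δ) ^ 2 / n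
        = 3 * (1 - 2 * δ) / (32 * (1 + 2 * δ) ^ 2 * n) := by
      field_simp
    rw [h1]
    ring
  by_cases hp : 2 * (Finset.univ.filter
      (fun k => ‖1 - z k‖ < Real.sqrt 2)).card ≤ n
  · obtain ⟨a, hsub⟩ := side hn z hz δ hδ0 hδ1 hp
    exact le_trans (hmeas a) (measure_mono hsub)
  · have hz' : ∀ k, ‖-z k‖ = 1 := by
      intro k
      rw [norm_neg]
      exact hz k
    have hdisj : Disjoint (Finset.univ.filter (fun k => ‖1 - z k‖ < Real.sqrt 2))
        (Finset.univ.filter (fun k => ‖1 - -z k‖ < Real.sqrt 2)) := by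
      rw [Finset.disjoint_left]
      intro k hk1 hk2
      rw [Finset.mem_filter] at hk1 hk2
      have h2 : ‖1 + z k‖ < Real.sqrt 2 := by
        have := hk2.2
        rwa [sub_neg_eq_add] at this
      exact not_both_close (z k) (hz k) hk1.2 h2
    have hp' : 2 * (Finset.univ.filter
        (fun k => ‖1 - -z k‖ < Real.sqrt 2)).card ≤ n := by
      have hcards := Finset.card_union_of_disjoint hdisj
      have hle : ((Finset.univ.filter (fun k => ‖1 - z k‖ < Real.sqrt 2)) ∪
          (Finset.univ.filter (fun k => ‖1 - -z k‖ < Real.sqrt 2))).card ≤ n := by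
        have := Finset.card_le_univ ((Finset.univ.filter (fun k => ‖1 - z k‖ < Real.sqrt 2)) ∪
          (Finset.univ.filter (fun k => ‖1 - -z k‖ < Real.sqrt 2)))
        simpa using this
      omega
    obtain ⟨a, hsub⟩ := side hn (fun k => -z k) hz' δ hδ0 hδ1 hp'
    have hseteq : {x : ℝ | x ∈ Icc (-1 : ℝ) 1 ∧ δ * n ≤ |((x : ℂ) * ∑ k, 1 / ((x : ℂ) - z k)).re|}
        = (fun x : ℝ => -x) ⁻¹' {x : ℝ | x ∈ Icc (-1 : ℝ) 1 ∧
            δ * n ≤ |((x : ℂ) * ∑ k, 1 / ((x : ℂ) - -z k)).re|} := by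
      ext x
      simp only [mem_setOf_eq, Set.mem_preimage, Set.mem_Icc]
      have hre : ((((-x) : ℝ) : ℂ) * ∑ k, 1 / ((((-x) : ℝ) : ℂ) - -z k))
          = ((x : ℂ) * ∑ k, 1 / ((x : ℂ) - z k)) := by
        push_cast
        rw [Finset.mul_sum, Finset.mul_sum]
        apply Finset.sum_congr rfl
        intro k _
        rw [show (-(x:ℂ) - -z k) = -((x:ℂ) - z k) by ring]
        rw [one_div, inv_neg, one_div]
        ring
      rw [hre]
      constructor
      · rintro ⟨⟨h1, h2⟩, h3⟩
        exact ⟨⟨by linarith, by linarith⟩, h3⟩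
      · rintro ⟨⟨h1, h2⟩, h3⟩
        exact ⟨⟨by linarith, by linarith⟩, h3⟩
    rw [hseteq]
    have hvol : volume ((fun x : ℝ => -x) ⁻¹' {x : ℝ | x ∈ Icc (-1 : ℝ) 1 ∧
            δ * n ≤ |((x : ℂ) * ∑ k, 1 / ((x : ℂ) - -z k)).re|})
        = volume {x : ℝ | x ∈ Icc (-1 : ℝ) 1 ∧
            δ * n ≤ |((x : ℂ) * ∑ k, 1 / ((x : ℂ) - -z k)).re|} :=
      Measure.measure_preimage_neg volume _
    rw [hvol]
    exact le_trans (hmeas a) (measure_mono hsub)
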